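/- Let G be a graph with identifying code C₀, and define the relation u ≡ v on V(G) to hold iff N(u) ∩ C₀ = N(v) ∩ C₀ and u is not adjacent to v (allowing u = v). Then ≡ is an equivalence relation. -/

import Mathlib

def closedNbr {V : Type*} (G : SimpleGraph V) (v : V) : Set V := insert v (G.neighborSet v)

def Dominating {V : Type*} (G : SimpleGraph V) (C : Set V) : Prop :=
  ∀ v ∉ C, ∃ c ∈ C, G.Adj v c

def Separating {V : Type*} (G : SimpleGraph V) (C : Set V) : Prop :=
  ∀ u v : V, u ≠ v → closedNbr G u ∩ C ≠ closedNbr G v ∩ C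

def IsIdCode {V : Type*} (G : SimpleGraph V) (C : Set V) : Prop :=
  Dominating G C ∧ Separating G C

theorem stmt7 {V : Type*} [Fintype V] (G : SimpleGraph V) (C₀ : Set V)
    (hC : IsIdCode G C₀) :
    Equivalence (fun u v : V =>
      G.neighborSet u ∩ C₀ = G.neighborSet v ∩ C₀ ∧ ¬ G.Adj u v) := by
  constructor
  · intro u
    exact ⟨rfl, G.loopless.irrefl u⟩
  · rintro u v ⟨h1, h2⟩
    exact ⟨h1.symm, fun h => h2 h.symm⟩
  · rintro u v w ⟨h1, h2⟩ ⟨h3, h4⟩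
    refine ⟨h1.trans h3, ?_⟩
    intro hadj
    apply hC.2 u w hadj.ne
    have huw : G.neighborSet u ∩ C₀ = G.neighborSet w ∩ C₀ := h1.trans h3
    ext x
    simp only [closedNbr, Set.mem_inter_iff, Set.mem_insert_iff]
    constructor
    · rintro ⟨hx, hxC⟩
      rcases hx with rfl | hx
      · have : x ∈ G.neighborSet w ∩ C₀ := ⟨hadj.symm, hxC⟩
        exact ⟨Or.inr this.1, hxC⟩
      · have : x ∈ G.neighborSet w ∩ C₀ := huw ▸ ⟨hx, hxC⟩
        exact ⟨Or.inr this.1, hxC⟩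
    · rintro ⟨hx, hxC⟩
      rcases hx with rfl | hx
      · exact ⟨Or.inr hadj, hxC⟩
      · have : x ∈ G.neighborSet u ∩ C₀ := huw.symm ▸ (⟨hx, hxC⟩ : x ∈ G.neighborSet w ∩ C₀)
        exact ⟨Or.inr this.1, hxC⟩
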